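/- arXiv:math/9811096 — 2 statements merged into one kernel-verified Lean document; each statement's English description precedes it below -/
import Mathlib

section
/- Distinct Eratosthenes rays with non-prime bases are pairwise disjoint: if a, b are natural numbers that are each either 1 or composite, and a ≠ b, then r(a) ∩ r(b) = ∅, where r(a) = { e(a,k) : k ≥ 1 } and e iterates m ↦ p_m. -/
open Nat

/-- The n-th prime number, 1-indexed: `nthPrime 1 = 2`. -/
noncomputable def nthPrime (n : ℕ) : ℕ := Nat.nth Nat.Prime (n - 1)


/-- The Eratosthenes progression of base `a`: `erat a 0 = a`,
`erat a (k+1) = nthPrime (erat a k)`. -/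
noncomputable def erat (a : ℕ) : ℕ → ℕ
  | 0 => a
  | k + 1 => nthPrime (erat a k)


/-- The Eratosthenes ray of base `a`: the set of all iterates `erat a k` for `k ≥ 1`. -/
noncomputable def ray (a : ℕ) : Set ℕ := {m | ∃ k, 1 ≤ k ∧ erat a k = m}

lemma nthPrime_prime (n : ℕ) : (nthPrime n).Prime :=
  Nat.prime_nth_prime _

lemma nthPrime_inj {m n : ℕ} (hm : 1 ≤ m) (hn : 1 ≤ n)
    (h : nthPrime m = nthPrime n) : m = n := by
  have := Nat.nth_injective Nat.infinite_setOf_prime h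
  omega

lemma erat_pos {a : ℕ} (ha : 1 ≤ a) (k : ℕ) : 1 ≤ erat a k := by
  cases k with
  | zero => exact ha
  | succ k => exact (nthPrime_prime _).two_le.trans' (by norm_num)

lemma erat_add (a k l : ℕ) : erat a (k + l) = erat (erat a l) k := by
  induction k with
  | zero => simp [erat]
  | succ k ih => rw [Nat.succ_add]; simp [erat, ih]

lemma erat_cancel {u v : ℕ} (hu : 1 ≤ u) (hv : 1 ≤ v) (k : ℕ)
    (h : erat u k = erat v k) : u = v := by
  induction k with
  | zero => exact h
  | succ k ih =>
      exact ih (nthPrime_inj (erat_pos hu k) (erat_pos hv k) h)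

lemma ray_disj {a b : ℕ}
    (ha : 1 ≤ a ∧ ¬ a.Prime) (hb : 1 ≤ b ∧ ¬ b.Prime) (hab : a ≠ b)
    {x : ℕ} {k l : ℕ} (hk : 1 ≤ k) (hl : 1 ≤ l) (hkl : k ≤ l)
    (hxa : erat a k = x) (hxb : erat b l = x) : False := by
  obtain ⟨d, rfl⟩ := Nat.exists_eq_add_of_le hkl
  rw [erat_add] at hxb
  have had : a = erat b d :=
    erat_cancel ha.1 (erat_pos hb.1 d) k (hxa.trans hxb.symm)
  cases d with
  | zero => exact hab had
  | succ d => exact ha.2 (had ▸ nthPrime_prime (erat b d))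

theorem principal_rays_disjoint (a b : ℕ)
    (ha : 1 ≤ a ∧ ¬ a.Prime) (hb : 1 ≤ b ∧ ¬ b.Prime) (hab : a ≠ b) :
    ray a ∩ ray b = ∅ := by
  ext x
  simp only [Set.mem_inter_iff, Set.mem_empty_iff_false, iff_false]
  rintro ⟨⟨k, hk, hxa⟩, ⟨l, hl, hxb⟩⟩
  rcases le_total k l with h | h
  · exact ray_disj ha hb hab hk hl h hxa hxb
  · exact ray_disj hb ha hab.symm hl hk h hxb hxa
end

section
/- The set of primes is partitioned by the principal Eratosthenes rays: the family { r(a) : a = 1 or a composite } consists of pairwise disjoint sets whose union is exactly the set of all primes, where r(a) = { e(a,k) : k ≥ 1 } and e iterates m ↦ p_m. -/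
open Nat

lemma nth_prime_ge (i : ℕ) : i + 2 ≤ Nat.nth Nat.Prime i := by
  induction i with
  | zero =>
    have := Nat.nth_mem_of_infinite Nat.infinite_setOf_prime 0
    exact this.two_le
  | succ i ih =>
    have : Nat.nth Nat.Prime i < Nat.nth Nat.Prime (i + 1) :=
(Nat.nth_lt_nth Nat.infinite_setOf_prime).2 (lt_add_one i)
    omega

lemma lt_nthPrime {n : ℕ} (hn : 1 ≤ n) : n < nthPrime n := by
  have := nth_prime_ge (n - 1)
  unfold nthPrime
  omega

lemma erat_prime (a k : ℕ) (hk : 1 ≤ k) : (erat a k).Prime := by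
  obtain ⟨k, rfl⟩ := Nat.exists_eq_add_of_le hk
  rw [add_comm]
  exact nthPrime_prime _

lemma erat_eq_base {a b : ℕ} (ha1 : 1 ≤ a) (ha : ¬ a.Prime) (hb1 : 1 ≤ b) (hb : ¬ b.Prime) :
    ∀ k l : ℕ, 1 ≤ k → 1 ≤ l → erat a k = erat b l → a = b := by
  intro k
  induction k with
  | zero => omega
  | succ k ih =>
    intro l hk hl h
    match l, hl with
    | l + 1, _ =>
      have h' : nthPrime (erat a k) = nthPrime (erat b l) := h
      rcases Nat.eq_zero_or_pos k with rfl | hk'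
      · rcases Nat.eq_zero_or_pos l with rfl | hl'
        · exact nthPrime_inj ha1 hb1 h'
        · have hp := erat_prime b l hl'
          have : a = erat b l := nthPrime_inj ha1 hp.one_lt.le h'
          exact absurd (this ▸ hp) ha
      · rcases Nat.eq_zero_or_pos l with rfl | hl'
        · have hp := erat_prime a k hk'
          have : erat a k = b := nthPrime_inj hp.one_lt.le hb1 h'
          exact absurd (this ▸ hp) hb
        · exact ih l hk' hl'
            (nthPrime_inj (erat_prime a k hk').one_lt.le (erat_prime b l hl').one_lt.le h')

lemma prime_mem_ray {q : ℕ} (hq : q.Prime) :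
    ∃ a, (1 ≤ a ∧ ¬ a.Prime) ∧ q ∈ ray a := by
  induction q using Nat.strong_induction_on with
  | _ q IH =>
    set m := Nat.count Nat.Prime q + 1 with hm
    have hm1 : 1 ≤ m := le_add_self
    have hmq : nthPrime m = q := by
      simpa [nthPrime, hm] using Nat.nth_count hq
    have hlt : m < q := hmq ▸ lt_nthPrime hm1
    by_cases hp : m.Prime
    · obtain ⟨a, hA, k, hk, he⟩ := IH m hlt hp
      exact ⟨a, hA, k + 1, by omega, by simp [erat, he, hmq]⟩
    · exact ⟨m, ⟨hm1, hp⟩, 1, le_refl 1, by simp [erat, hmq]⟩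

theorem primes_partitioned_by_principal_rays :
    (∀ a b : ℕ, (1 ≤ a ∧ ¬ a.Prime) → (1 ≤ b ∧ ¬ b.Prime) → a ≠ b →
      Disjoint (ray a) (ray b)) ∧
    (⋃ a ∈ {a : ℕ | 1 ≤ a ∧ ¬ a.Prime}, ray a) = {q : ℕ | q.Prime} := by
  constructor
  · rintro a b ⟨ha1, ha⟩ ⟨hb1, hb⟩ hab
    rw [Set.disjoint_left]
    rintro q ⟨k, hk, hka⟩ ⟨l, hl, hlb⟩
    exact hab (erat_eq_base ha1 ha hb1 hb k l hk hl (hka.trans hlb.symm))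
  · ext q
    simp only [Set.mem_iUnion, Set.mem_setOf_eq]
    constructor
    · rintro ⟨a, ⟨ha1, ha⟩, k, hk, rfl⟩
      exact erat_prime a k hk
    · intro hq
      obtain ⟨a, hA, hr⟩ := prime_mem_ray hq
      exact ⟨a, hA, hr⟩
end
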